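/- For every n ≥ 0, the integer D_n = ∏_{p prime, p | s} p^{r_p(n)} divides gcd(C_n^+, C_n^−), where r_2(n) = n+1 and r_p(n) = v_p((n+1)!) for odd primes p. -/

import Mathlib

open Finset

/-- `C_n^±` with the sign of `s` carrying the `±`:
`C_0 = 2t + s`, `C_1 = 12t² + 6ts + s²`, `C_n = 2t(2n+1) C_{n-1} + s² C_{n-2}`.
Then `C_n^+ = Cpm s t n` and `C_n^- = Cpm (-s) t n`. -/
def Cpm (s t : ℤ) : ℕ → ℤ
  | 0 => 2 * t + s
  | 1 => 12 * t ^ 2 + 6 * t * s + s ^ 2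
  | n + 2 => 2 * t * (2 * (n + 2) + 1) * Cpm s t (n + 1) + s ^ 2 * Cpm s t n

/-- `r_2(n) = n + 1`, and `r_p(n) = v_p((n+1)!)` for odd primes `p`. -/
def rP (p n : ℕ) : ℕ :=
  if p = 2 then n + 1 else ((n + 1).factorial.factorization p)

/-- `D_n = ∏_{p prime, p ∣ s} p^{r_p(n)}`. -/
def Dn (s : ℤ) (n : ℕ) : ℕ := ∏ p ∈ s.natAbs.primeFactors, p ^ rP p n

namespace DnAux

/-- The coefficient `(n+1+k)! / (k! (n+1-k)!)`. -/
def c (n k : ℕ) : ℕ := (n + 1 + k).choose k * (n + 1).descFactorial k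

lemma c_zero (n : ℕ) : c n 0 = 1 := by simp [c]

lemma c_eq_zero {n k : ℕ} (h : n + 1 < k) : c n k = 0 := by
  simp [c, Nat.descFactorial_eq_zero_iff_lt.2 h]

lemma c_mul_fact {n k : ℕ} (h : k ≤ n + 1) :
    c n k * (k.factorial * (n + 1 - k).factorial) = (n + 1 + k).factorial := by
  have h1 : (n + 1 - k).factorial * (n + 1).descFactorial k = (n + 1).factorial :=
    Nat.factorial_mul_descFactorial h
  have h2 : (n + 1 + k).choose k * k.factorial * (n + 1 + k - k).factorial
      = (n + 1 + k).factorial :=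
    Nat.choose_mul_factorial_mul_factorial (Nat.le_add_left k (n + 1))
  have h3 : n + 1 + k - k = n + 1 := by omega
  rw [h3] at h2
  calc c n k * (k.factorial * (n + 1 - k).factorial)
      = (n + 1 + k).choose k * k.factorial *
        ((n + 1 - k).factorial * (n + 1).descFactorial k) := by unfold c; ring
    _ = (n + 1 + k).choose k * k.factorial * (n + 1).factorial := by rw [h1]
    _ = (n + 1 + k).factorial := h2

lemma scalar (n k : ℕ) (hk : k ≤ n + 2) :
    (n + 4 + k) * (n + 3 + k) = (4 * n + 10) * (k + 1) + (n + 2 - k) * (n + 1 - k) := by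
  rcases Nat.lt_or_ge k (n + 1) with h | h
  · have h1 : n + 2 - k = (n - k) + 2 := by omega
    have h2 : n + 1 - k = (n - k) + 1 := by omega
    obtain ⟨j, rfl⟩ : ∃ j, n = k + j := ⟨n - k, by omega⟩
    rw [h1, h2]
    have h3 : k + j - k = j := by omega
    rw [h3]; ring
  · have : k = n + 1 ∨ k = n + 2 := by omega
    rcases this with rfl | rfl
    · have e1 : n + 2 - (n + 1) = 1 := by omega
      have e2 : n + 1 - (n + 1) = 0 := by omega
      rw [e1, e2]; ring
    · have e1 : n + 2 - (n + 2) = 0 := by omega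
      rw [e1]; ring

lemma key (n k : ℕ) :
    c (n + 2) (k + 1) = (4 * n + 10) * c (n + 1) k + c n (k + 1) := by
  rcases Nat.lt_or_ge (n + 2) k with h | hk
  · rw [c_eq_zero (by omega : n + 2 + 1 < k + 1), c_eq_zero (by omega : n + 1 + 1 < k),
      c_eq_zero (by omega : n + 1 < k + 1)]
    simp
  · have M0 : 0 < (k + 1).factorial * (n + 2 - k).factorial :=
      Nat.mul_pos (Nat.factorial_pos _) (Nat.factorial_pos _)
    apply Nat.eq_of_mul_eq_mul_right M0
    have hL : c (n + 2) (k + 1) * ((k + 1).factorial * (n + 2 - k).factorial)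
        = (n + 4 + k).factorial := by
      have h := c_mul_fact (n := n + 2) (k := k + 1) (by omega)
      have e1 : n + 2 + 1 - (k + 1) = n + 2 - k := by omega
      have e2 : n + 2 + 1 + (k + 1) = n + 4 + k := by omega
      rwa [e1, e2] at h
    have hA : c (n + 1) k * (k.factorial * (n + 2 - k).factorial)
        = (n + 2 + k).factorial := by
      have h := c_mul_fact (n := n + 1) (k := k) (by omega)
      have e1 : n + 1 + 1 - k = n + 2 - k := by omega
      have e2 : n + 1 + 1 + k = n + 2 + k := by omega
      rwa [e1, e2] at h
    have hB : c n (k + 1) * ((k + 1).factorial * (n + 2 - k).factorial)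
        = (n + 2 + k).factorial * ((n + 2 - k) * (n + 1 - k)) := by
      rcases Nat.lt_or_ge (n + 1) (k + 1) with h1 | h1
      · have e0 : n + 1 - k = 0 := by omega
        rw [c_eq_zero h1, e0]; simp
      · have hck := c_mul_fact (n := n) (k := k + 1) h1
        have e1 : n + 1 - (k + 1) = n - k := by omega
        have e2 : n + 1 + (k + 1) = n + 2 + k := by omega
        rw [e1, e2] at hck
        have e3 : (n + 2 - k).factorial
            = (n + 2 - k) * ((n + 1 - k) * (n - k).factorial) := by
          rw [show n + 2 - k = (n + 1 - k) + 1 by omega, Nat.factorial_succ,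
            show n + 1 - k + 1 = n + 2 - k by omega,
            show n + 1 - k = (n - k) + 1 by omega, Nat.factorial_succ,
            show n - k + 1 = n + 1 - k by omega]
        calc c n (k + 1) * ((k + 1).factorial * (n + 2 - k).factorial)
            = c n (k + 1) * ((k + 1).factorial * (n - k).factorial)
              * ((n + 2 - k) * (n + 1 - k)) := by rw [e3]; ring
          _ = (n + 2 + k).factorial * ((n + 2 - k) * (n + 1 - k)) := by rw [hck]
    rw [add_mul, hL, hB]
    have hA' : (4 * n + 10) * c (n + 1) k * ((k + 1).factorial * (n + 2 - k).factorial)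
        = (4 * n + 10) * (k + 1) * (n + 2 + k).factorial := by
      calc (4 * n + 10) * c (n + 1) k * ((k + 1).factorial * (n + 2 - k).factorial)
          = (4 * n + 10) * (k + 1)
            * (c (n + 1) k * (k.factorial * (n + 2 - k).factorial)) := by
            rw [Nat.factorial_succ]; ring
        _ = (4 * n + 10) * (k + 1) * (n + 2 + k).factorial := by rw [hA]
    rw [hA']
    have hL' : (n + 4 + k).factorial
        = (n + 4 + k) * (n + 3 + k) * (n + 2 + k).factorial := by
      rw [show n + 4 + k = (n + 3 + k) + 1 by omega, Nat.factorial_succ,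
        show n + 3 + k + 1 = n + 4 + k by omega,
        show n + 3 + k = (n + 2 + k) + 1 by omega, Nat.factorial_succ,
        show n + 2 + k + 1 = n + 3 + k by omega]
      ring
    rw [hL', scalar n k hk]
    ring

lemma closed (s t : ℤ) :
    ∀ n, Cpm s t n = ∑ k ∈ range (n + 2), (c n k : ℤ) * t ^ k * s ^ (n + 1 - k) := by
  intro n
  induction n using Nat.twoStepInduction with
  | zero =>
    have h0 : c 0 0 = 1 := rfl
    have h1 : c 0 1 = 2 := rfl
    simp [Cpm, Finset.sum_range_succ, h0, h1]
    ring
  | one =>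
    have h0 : c 1 0 = 1 := rfl
    have h1 : c 1 1 = 6 := rfl
    have h2 : c 1 2 = 12 := rfl
    simp [Cpm, Finset.sum_range_succ, h0, h1, h2]
    ring_nf
  | more n ih0 ih1 =>
    have hdef : Cpm s t (n + 2)
        = 2 * t * (2 * ((n : ℤ) + 2) + 1) * Cpm s t (n + 1) + s ^ 2 * Cpm s t n := by
      show Cpm s t (n + 2) = _
      rw [Cpm]
    rw [hdef, ih0, ih1]
    -- RHS sum manipulation
    have hsplit : ∑ k ∈ range (n + 4), (c (n + 2) k : ℤ) * t ^ k * s ^ (n + 3 - k)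
        = (∑ k ∈ range (n + 3), (c (n + 2) (k + 1) : ℤ) * t ^ (k + 1) * s ^ (n + 2 - k))
          + (c (n + 2) 0 : ℤ) * t ^ 0 * s ^ (n + 3) := by
      rw [Finset.sum_range_succ']
      congr 1
      refine Finset.sum_congr rfl fun k hk => ?_
      rw [Finset.mem_range] at hk
      congr 2
      omega
    rw [hsplit]
    have hkey : ∀ k ∈ range (n + 3),
        (c (n + 2) (k + 1) : ℤ) * t ^ (k + 1) * s ^ (n + 2 - k)
        = ((4 * n + 10 : ℕ) : ℤ) * ((c (n + 1) k : ℤ) * t ^ k * s ^ (n + 2 - k)) * t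
          + (c n (k + 1) : ℤ) * t ^ (k + 1) * s ^ (n + 2 - k) := by
      intro k _
      rw [key n k]
      push_cast
      ring
    rw [Finset.sum_congr rfl hkey, Finset.sum_add_distrib]
    -- first piece equals 2t(2(n+2)+1) * sum
    have hfirst : ∑ k ∈ range (n + 3),
        ((4 * n + 10 : ℕ) : ℤ) * ((c (n + 1) k : ℤ) * t ^ k * s ^ (n + 2 - k)) * t
        = 2 * t * (2 * ((n : ℤ) + 2) + 1)
          * ∑ k ∈ range (n + 3), (c (n + 1) k : ℤ) * t ^ k * s ^ (n + 2 - k) := by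
      rw [Finset.mul_sum]
      refine Finset.sum_congr rfl fun k _ => ?_
      push_cast
      ring
    rw [hfirst]
    -- second piece equals s^2 * sum
    have hsecond : s ^ 2 * ∑ k ∈ range (n + 2), (c n k : ℤ) * t ^ k * s ^ (n + 1 - k)
        = ∑ k ∈ range (n + 3), (c n (k + 1) : ℤ) * t ^ (k + 1) * s ^ (n + 2 - k)
          + (c n 0 : ℤ) * t ^ 0 * s ^ (n + 3) := by
      have e1 : s ^ 2 * ∑ k ∈ range (n + 2), (c n k : ℤ) * t ^ k * s ^ (n + 1 - k)
          = ∑ k ∈ range (n + 2), (c n k : ℤ) * t ^ k * s ^ (n + 3 - k) := by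
        rw [Finset.mul_sum]
        refine Finset.sum_congr rfl fun k hk => ?_
        rw [Finset.mem_range] at hk
        have e2 : n + 3 - k = (n + 1 - k) + 2 := by omega
        rw [e2, pow_add]
        ring
      have e4 : ∑ k ∈ range (n + 3), (c n (k + 1) : ℤ) * t ^ (k + 1) * s ^ (n + 2 - k)
          = ∑ k ∈ range (n + 1), (c n (k + 1) : ℤ) * t ^ (k + 1) * s ^ (n + 2 - k) := by
        rw [Finset.sum_range_succ, Finset.sum_range_succ,
          c_eq_zero (show n + 1 < n + 1 + 1 by omega),
          c_eq_zero (show n + 1 < n + 2 + 1 by omega)]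
        push_cast
        ring
      rw [e4, e1, Finset.sum_range_succ']
      congr 1
      refine Finset.sum_congr rfl fun k hk => ?_
      rw [Finset.mem_range] at hk
      congr 2
      omega
    rw [hsecond]
    simp only [c_zero]
    push_cast
    ring

lemma two_pow_mul_factorial_dvd : ∀ k : ℕ, 2 ^ k * k.factorial ∣ (2 * k).factorial := by
  intro k
  induction k with
  | zero => simp
  | succ k ih =>
    have e1 : 2 ^ (k + 1) * (k + 1).factorial = (2 * k + 2) * (2 ^ k * k.factorial) := by
      rw [Nat.factorial_succ]; ring
    have e2 : (2 * (k + 1)).factorial = (2 * k + 2) * ((2 * k + 1) * (2 * k).factorial) := by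
      rw [show 2 * (k + 1) = (2 * k + 1) + 1 by omega, Nat.factorial_succ, Nat.factorial_succ]
    rw [e1, e2]
    exact Nat.mul_dvd_mul_left _ (ih.trans (dvd_mul_left _ _))

lemma two_pow_dvd_c {n k : ℕ} (hk : k ≤ n + 1) : 2 ^ k ∣ c n k := by
  have h1 : 2 ^ k * k.factorial ∣ (2 * k).factorial := two_pow_mul_factorial_dvd k
  have h2 : (2 * k).factorial * (n + 1 - k).factorial ∣ (2 * k + (n + 1 - k)).factorial :=
    Nat.factorial_mul_factorial_dvd_factorial_add _ _
  have e : 2 * k + (n + 1 - k) = n + 1 + k := by omega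
  rw [e] at h2
  have h3 : 2 ^ k * (k.factorial * (n + 1 - k).factorial) ∣ (n + 1 + k).factorial := by
    calc 2 ^ k * (k.factorial * (n + 1 - k).factorial)
        = 2 ^ k * k.factorial * (n + 1 - k).factorial := by ring
      _ ∣ (2 * k).factorial * (n + 1 - k).factorial := Nat.mul_dvd_mul_right h1 _
      _ ∣ (n + 1 + k).factorial := h2
  rw [← c_mul_fact hk] at h3
  exact (Nat.mul_dvd_mul_iff_right
    (Nat.mul_pos (Nat.factorial_pos _) (Nat.factorial_pos _))).mp h3

lemma factorization_factorial_le {p : ℕ} (hp : p.Prime) (m : ℕ) :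
    (m.factorial).factorization p ≤ m := by
  have hd : p ^ ((m.factorial).factorization p) ∣ m.factorial := Nat.ordProj_dvd _ _
  rw [Nat.Prime.pow_dvd_factorial_iff hp (Nat.lt_succ_self _)] at hd
  exact hd.trans ((Nat.geom_sum_Ico_le hp.two_le _ _).trans (Nat.div_le_self _ _))

lemma nat_dvd {p : ℕ} (hp : p.Prime) {n k : ℕ} (hk : k ≤ n + 1) :
    p ^ rP p n ∣ c n k * p ^ (n + 1 - k) := by
  unfold rP
  split_ifs with h2
  · subst h2
    have e : 2 ^ (n + 1) = 2 ^ k * 2 ^ (n + 1 - k) := by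
      rw [← pow_add]; congr 1; omega
    rw [e]
    exact Nat.mul_dvd_mul (two_pow_dvd_c hk) dvd_rfl
  · have hDF : (n + 1 - k).factorial * (n + 1).descFactorial k = (n + 1).factorial :=
      Nat.factorial_mul_descFactorial hk
    have hD0 : (n + 1).descFactorial k ≠ 0 := by
      rw [Ne, Nat.descFactorial_eq_zero_iff_lt]; omega
    have hfac : ((n + 1).factorial).factorization p
        = ((n + 1).descFactorial k).factorization p
          + ((n + 1 - k).factorial).factorization p := by
      rw [← hDF, Nat.factorization_mul (Nat.factorial_ne_zero _) hD0]
      simp [add_comm]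
    rw [hfac, pow_add]
    apply Nat.mul_dvd_mul
    · exact (Nat.ordProj_dvd _ _).trans (Dvd.intro_left _ rfl)
    · exact pow_dvd_pow p (factorization_factorial_le hp _)

lemma prime_pow_dvd (s t : ℤ) {p : ℕ} (hp : p.Prime) (hps : (p : ℤ) ∣ s) (n : ℕ) :
    (p : ℤ) ^ rP p n ∣ Cpm s t n := by
  rw [closed s t n]
  apply Finset.dvd_sum
  intro k hk
  rw [Finset.mem_range] at hk
  have hk' : k ≤ n + 1 := by omega
  have hnat : p ^ rP p n ∣ c n k * p ^ (n + 1 - k) := nat_dvd hp hk'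
  have hint : (p : ℤ) ^ rP p n ∣ (c n k : ℤ) * (p : ℤ) ^ (n + 1 - k) := by
    have := Int.natCast_dvd_natCast.mpr hnat
    push_cast at this
    exact this
  refine hint.trans ?_
  have h1 : (p : ℤ) ^ (n + 1 - k) ∣ s ^ (n + 1 - k) := pow_dvd_pow_of_dvd hps _
  calc (c n k : ℤ) * (p : ℤ) ^ (n + 1 - k)
      ∣ (c n k : ℤ) * s ^ (n + 1 - k) := mul_dvd_mul_left _ h1
    _ ∣ (c n k : ℤ) * t ^ k * s ^ (n + 1 - k) := ⟨t ^ k, by ring⟩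

lemma prod_pow_dvd {S : Finset ℕ} (hS : ∀ p ∈ S, p.Prime) (e : ℕ → ℕ) {m : ℕ}
    (h : ∀ p ∈ S, p ^ e p ∣ m) : (∏ p ∈ S, p ^ e p) ∣ m := by
  classical
  induction S using Finset.induction_on with
  | empty => simpa using one_dvd m
  | insert a S ha ih =>
    rw [Finset.prod_insert ha]
    refine Nat.Coprime.mul_dvd_of_dvd_of_dvd ?_ (h _ (Finset.mem_insert_self _ _))
      (ih (fun p hp => hS p (Finset.mem_insert_of_mem hp))
        (fun p hp => h p (Finset.mem_insert_of_mem hp)))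
    apply Nat.Coprime.prod_right
    intro p hp
    exact Nat.Coprime.pow _ _
      ((Nat.coprime_primes (hS a (Finset.mem_insert_self _ _))
        (hS p (Finset.mem_insert_of_mem hp))).mpr (fun hap => ha (hap ▸ hp)))

lemma main_dvd (s t : ℤ) (n : ℕ) : (Dn s n : ℤ) ∣ Cpm s t n := by
  rw [Int.natCast_dvd]
  unfold Dn
  apply prod_pow_dvd (fun p hp => Nat.prime_of_mem_primeFactors hp)
  intro p hp
  have hpp : p.Prime := Nat.prime_of_mem_primeFactors hp
  have hps : (p : ℤ) ∣ s := by
    have h1 : p ∣ s.natAbs := Nat.dvd_of_mem_primeFactors hp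
    exact (Int.natCast_dvd_natCast.mpr h1).trans (Int.natAbs_dvd.mpr dvd_rfl)
  have h1 := prime_pow_dvd s t hpp hps n
  have h2 : ((p ^ rP p n : ℕ) : ℤ) ∣ Cpm s t n := by push_cast; exact h1
  rwa [Int.natCast_dvd] at h2

end DnAux

theorem Dn_dvd_gcd (s t : ℤ) (hs : s ≠ 0) (ht : 0 < t) (hst : Int.gcd s t = 1)
    (n : ℕ) : Dn s n ∣ Int.gcd (Cpm s t n) (Cpm (-s) t n) := by
  have h1 : (Dn s n : ℤ) ∣ Cpm s t n := DnAux.main_dvd s t n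
  have h2 : (Dn s n : ℤ) ∣ Cpm (-s) t n := by
    have := DnAux.main_dvd (-s) t n
    have e : Dn (-s) n = Dn s n := by unfold Dn; rw [Int.natAbs_neg]
    rwa [e] at this
  exact Int.dvd_gcd h1 h2
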